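/- For any non-negative integer $n$, $\sum_{j=0}^{n+1} (-1)^j \frac{(n+1)!\,(n+2)!}{(j+1)!\,(n+1-j)!} = (n+1)!$. -/

import Mathlib

open Finset

theorem stmt_1 (n : ℕ) :
    ∑ j ∈ Finset.range (n + 2),
      ((-1 : ℚ) ^ j) * ((Nat.factorial (n + 1)) * (Nat.factorial (n + 2))) /
        ((Nat.factorial (j + 1)) * (Nat.factorial (n + 1 - j)))
      = (Nat.factorial (n + 1) : ℚ) := by
  have h1 : ∀ j ∈ Finset.range (n+2),
      ((-1 : ℚ) ^ j) * ((Nat.factorial (n + 1)) * (Nat.factorial (n + 2))) /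
        ((Nat.factorial (j + 1)) * (Nat.factorial (n + 1 - j)))
      = (Nat.factorial (n+1) : ℚ) * ((-1:ℚ)^j * ((n+2).choose (j+1))) := by
    intro j hj
    have hj' : j + 1 ≤ n + 2 := Nat.succ_le_succ (Nat.le_of_lt_succ (Finset.mem_range.mp hj))
    have key : (n+2).choose (j+1) * Nat.factorial (j+1) * Nat.factorial ((n+2) - (j+1))
        = Nat.factorial (n+2) := Nat.choose_mul_factorial_mul_factorial hj'
    have hsub : n + 2 - (j+1) = n + 1 - j := by omega
    rw [hsub] at key
    have hQ : ((n+2).choose (j+1) : ℚ) * Nat.factorial (j+1) * Nat.factorial (n+1-j)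
        = Nat.factorial (n+2) := by exact_mod_cast congrArg (Nat.cast : ℕ → ℚ) key
    have hne : ((Nat.factorial (j+1) : ℚ) * Nat.factorial (n+1-j)) ≠ 0 := by
      have := (j+1).factorial_pos
      have := (n+1-j).factorial_pos
      positivity
    rw [div_eq_iff hne]
    linear_combination (-(-1:ℚ)^j * Nat.factorial (n+1)) * hQ
  rw [Finset.sum_congr rfl h1, ← Finset.mul_sum]
  have hS : ∑ j ∈ Finset.range (n+2), (-1:ℚ)^j * ((n+2).choose (j+1)) = 1 := by
    have hT : ∑ k ∈ Finset.range (n+3), (-1:ℚ)^k * ((n+2).choose k) = 0 := by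
      have h := Int.alternating_sum_range_choose_of_ne (n := n+2) (by omega)
      have := congrArg (Int.cast : ℤ → ℚ) h
      push_cast at this
      exact this
    rw [Finset.sum_range_succ'] at hT
    have h2 : ∑ j ∈ Finset.range (n+2), (-1:ℚ)^(j+1) * ((n+2).choose (j+1))
        = -∑ j ∈ Finset.range (n+2), (-1:ℚ)^j * ((n+2).choose (j+1)) := by
      rw [← Finset.sum_neg_distrib]
      exact Finset.sum_congr rfl fun j _ => by ring
    rw [h2] at hT
    simp at hT
    linarith
  rw [hS, mul_one]
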